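/- (Change of basis for the companion matrix.) Let K be a field, ℓ ≥ 1, and p : Fin ℓ → K. Let M : Matrix (Fin ℓ) (Fin ℓ) K be the companion-type matrix defined by M i j = (if (i : ℕ) = (j : ℕ) + 1 then 1 else 0) + (if (j : ℕ) = ℓ − 1 then p i else 0) (subdiagonal of 1's and last column p). Define C : Matrix (Fin ℓ) (Fin ℓ) K by C i j = (M ^ (i : ℕ)) 0 j. Then: (a) C is symmetric, Cᵀ = C; (b) C * M = Mᵀ * C; and (c) the first row of C is the standard basis vector, i.e. C 0 j = if j = 0 then 1 else 0. -/
import Mathlib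


/-- **Change of basis for the companion matrix.** Let `M` be the state-change matrix of a
Galois LFSR (subdiagonal of 1's and last column `p`), and let `C` be the matrix whose `i`-th
row is the first row of `M ^ i`. Then `C` is symmetric, `C * M = Mᵀ * C`, and the first row
of `C` is the standard basis vector. -/
theorem stmt9 (K : Type*) [Field K] (ℓ : ℕ) (hℓ : 0 < ℓ) (p : Fin ℓ → K)
    (M C : Matrix (Fin ℓ) (Fin ℓ) K)
    (hM : ∀ i j : Fin ℓ, M i j =
      (if (i : ℕ) = (j : ℕ) + 1 then 1 else 0) + (if (j : ℕ) = ℓ - 1 then p i else 0))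
    (hC : ∀ i j : Fin ℓ, C i j = (M ^ (i : ℕ)) ⟨0, hℓ⟩ j) :
    C.transpose = C ∧ C * M = M.transpose * C ∧
      (∀ j : Fin ℓ, C ⟨0, hℓ⟩ j = if j = ⟨0, hℓ⟩ then 1 else 0) := by
  set z : Fin ℓ := ⟨0, hℓ⟩ with hz
  -- step lemma
  have hA : ∀ (i : ℕ) (j : Fin ℓ), (M ^ (i + 1)) z j =
      (if h : (j : ℕ) + 1 < ℓ then (M ^ i) z ⟨(j : ℕ) + 1, h⟩ else 0) +
      (if (j : ℕ) = ℓ - 1 then ∑ k, (M ^ i) z k * p k else 0) := by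
    intro i j
    rw [pow_succ, Matrix.mul_apply]
    have : ∀ k : Fin ℓ, (M ^ i) z k * M k j =
        (M ^ i) z k * (if (k : ℕ) = (j : ℕ) + 1 then (1:K) else 0) +
        (M ^ i) z k * (if (j : ℕ) = ℓ - 1 then p k else 0) := by
      intro k; rw [hM k j, mul_add]
    rw [Finset.sum_congr rfl (fun k _ => this k), Finset.sum_add_distrib]
    congr 1
    · split_ifs with h
      · rw [Finset.sum_eq_single (⟨(j : ℕ) + 1, h⟩ : Fin ℓ)]
        · simp
        · intro k _ hk
          have : (k : ℕ) ≠ (j : ℕ) + 1 := fun hc => hk (Fin.ext hc)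
          simp [this]
        · simp
      · apply Finset.sum_eq_zero
        intro k _
        have : (k : ℕ) ≠ (j : ℕ) + 1 := by have := k.isLt; omega
        simp [this]
    · split_ifs with h
      · rfl
      · simp
  -- Hankel lemma
  have hB : ∀ (m : ℕ) (h : m < ℓ) (i : ℕ), (M ^ i) z ⟨m, h⟩ = (M ^ (i + m)) z z := by
    intro m
    induction m with
    | zero => intro h i; simp [hz]
    | succ n ih =>
      intro h i
      have hn : n < ℓ := by omega
      have h1 := hA i ⟨n, hn⟩
      rw [dif_pos (show n + 1 < ℓ from h), if_neg (show ¬ (n = ℓ - 1) by omega),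
        add_zero] at h1
      have h2 := ih hn (i + 1)
      calc (M ^ i) z ⟨n + 1, h⟩ = (M ^ (i + 1)) z ⟨n, hn⟩ := h1.symm
      _ = (M ^ (i + 1 + n)) z z := h2
      _ = (M ^ (i + (n + 1))) z z := by ring_nf
  -- recurrence lemma
  have hR : ∀ n : ℕ, (M ^ (n + ℓ)) z z = ∑ k : Fin ℓ, p k * (M ^ (n + (k : ℕ))) z z := by
    intro n
    have h1 : ℓ - 1 < ℓ := by omega
    have hA1 := hA n ⟨ℓ - 1, h1⟩
    rw [dif_neg (show ¬ ((ℓ - 1 : ℕ) + 1 < ℓ) by omega), if_pos rfl, zero_add] at hA1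
    have hB1 := hB (ℓ - 1) h1 (n + 1)
    have he : n + 1 + (ℓ - 1) = n + ℓ := by omega
    rw [he] at hB1
    rw [← hB1, hA1]
    apply Finset.sum_congr rfl
    intro k _
    rw [hB (k : ℕ) k.isLt n, mul_comm]
  refine ⟨?_, ?_, ?_⟩
  · ext i j
    rw [Matrix.transpose_apply, hC, hC, hB (i : ℕ) i.isLt (j : ℕ),
      hB (j : ℕ) j.isLt (i : ℕ), add_comm]
  · ext i j
    have hLHS : (C * M) i j = (M ^ ((i : ℕ) + 1)) z j := by
      rw [Matrix.mul_apply, pow_succ, Matrix.mul_apply]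
      exact Finset.sum_congr rfl fun k _ => by rw [hC]
    have hRHS : (M.transpose * C) i j =
        (if h : (i : ℕ) + 1 < ℓ then (M ^ ((i : ℕ) + 1)) z j else 0) +
        (if (i : ℕ) = ℓ - 1 then ∑ k : Fin ℓ, p k * (M ^ (k : ℕ)) z j else 0) := by
      rw [Matrix.mul_apply]
      have : ∀ k : Fin ℓ, M.transpose i k * C k j =
          (if (k : ℕ) = (i : ℕ) + 1 then (1:K) else 0) * (M ^ (k : ℕ)) z j +
          (if (i : ℕ) = ℓ - 1 then p k else 0) * (M ^ (k : ℕ)) z j := by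
        intro k; rw [Matrix.transpose_apply, hM k i, hC, add_mul]
      rw [Finset.sum_congr rfl (fun k _ => this k), Finset.sum_add_distrib]
      congr 1
      · split_ifs with h
        · rw [Finset.sum_eq_single (⟨(i : ℕ) + 1, h⟩ : Fin ℓ)]
          · simp
          · intro k _ hk
            have : (k : ℕ) ≠ (i : ℕ) + 1 := fun hc => hk (Fin.ext hc)
            simp [this]
          · simp
        · apply Finset.sum_eq_zero
          intro k _
          have : (k : ℕ) ≠ (i : ℕ) + 1 := by have := k.isLt; omega
          simp [this]
      · split_ifs with h
        · rfl
        · apply Finset.sum_eq_zero; intro k _; exact zero_mul _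
    rw [hLHS, hRHS]
    by_cases h : (i : ℕ) + 1 < ℓ
    · rw [dif_pos h, if_neg (show ¬ ((i : ℕ) = ℓ - 1) by omega), add_zero]
    · have hi : (i : ℕ) = ℓ - 1 := by have := i.isLt; omega
      rw [dif_neg h, if_pos hi, zero_add]
      have hiℓ : (i : ℕ) + 1 = ℓ := by omega
      rw [hiℓ, hB (j : ℕ) j.isLt ℓ, (by omega : ℓ + (j : ℕ) = (j : ℕ) + ℓ), hR (j : ℕ)]
      apply Finset.sum_congr rfl
      intro k _
      rw [hB (j : ℕ) j.isLt (k : ℕ), Nat.add_comm (j : ℕ) (k : ℕ)]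
  · intro j
    rw [hC, show ((z : Fin ℓ) : ℕ) = 0 from rfl, pow_zero, Matrix.one_apply]
    by_cases h : j = z
    · simp [h]
    · rw [if_neg h, if_neg (fun hc => h hc.symm)]
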